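/- Every loop satisfying identity C14 is an LC-loop: if a loop satisfies x·(y·(y·z)) = (x·(y·y))·z for all x,y,z, then it satisfies (x·x)·(y·z) = (x·(x·y))·z for all x,y,z. -/
import Mathlib

/-- A loop: a set with multiplication, left division `ldiv` (written `\`),
right division `rdiv` (written `/`), and a two-sided identity `e`. -/
structure Loop (α : Type) where
  mul : α → α → α
  ldiv : α → α → α
  rdiv : α → α → α
  e : α
  mul_ldiv : ∀ a b, mul a (ldiv a b) = b
  rdiv_mul : ∀ a b, mul (rdiv b a) a = b
  ldiv_mul : ∀ a b, ldiv a (mul a b) = b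
  mul_rdiv : ∀ a b, rdiv (mul b a) a = b
  e_mul : ∀ a, mul e a = a
  mul_e : ∀ a, mul a e = a

theorem stmt_10 (α : Type) (L : Loop α) (h : ∀ x y z : α, L.mul x (L.mul y (L.mul y z)) = L.mul (L.mul x (L.mul y y)) z) :
    ∀ x y z : α, L.mul (L.mul x x) (L.mul y z) = L.mul (L.mul x (L.mul x y)) z := by
  intro x y z
  have lem7 : ∀ v0 : α, (L.mul L.e v0) = v0 := fun v0 => (L.e_mul v0)
  have lem8 : ∀ v0 : α, (L.mul v0 L.e) = v0 := fun v0 => (L.mul_e v0)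
  have lem9 : ∀ v0 v1 : α, (L.mul v0 (L.ldiv v0 v1)) = v1 := fun v0 v1 => (L.mul_ldiv v0 v1)
  have lem11 : ∀ v0 v1 : α, (L.mul (L.rdiv v0 v1) v1) = v0 := fun v0 v1 => (L.rdiv_mul v1 v0)
  have lem13 : ∀ v0 v1 : α, (L.ldiv v0 (L.mul v0 v1)) = v1 := fun v0 v1 => (L.ldiv_mul v0 v1)
  have lem15 : ∀ v0 v1 : α, (L.rdiv (L.mul v0 v1) v1) = v0 := fun v0 v1 => (L.mul_rdiv v1 v0)
  have lem18 : ∀ v0 v1 : α, v0 = (L.rdiv v1 (L.ldiv v0 v1)) := fun v0 v1 => (Eq.trans (Eq.symm (lem15 v0 (L.ldiv v0 v1))) (congrArg (fun _w => (L.rdiv _w (L.ldiv v0 v1))) (lem9 v0 v1)))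
  have lem19 : ∀ v0 v1 v2 : α, (L.mul v0 (L.mul v1 (L.mul v1 v2))) = (L.mul (L.mul v0 (L.mul v1 v1)) v2) := fun v0 v1 v2 => (h v0 v1 v2)
  have lem20 : ∀ v0 v1 : α, (L.mul v0 (L.mul v0 v1)) = (L.mul (L.mul v0 v0) v1) := fun v0 v1 => (Eq.trans (Eq.trans (Eq.symm (lem7 (L.mul v0 (L.mul v0 v1)))) (lem19 L.e v0 v1)) (congrArg (fun _w => (L.mul _w v1)) (lem7 (L.mul v0 v0))))
  have lem34 : ∀ v0 v1 v2 : α, (L.mul v0 (L.mul v1 (L.mul v1 (L.ldiv (L.mul v0 (L.mul v1 v1)) v2)))) = v2 := fun v0 v1 v2 => (Eq.trans (lem19 v0 v1 (L.ldiv (L.mul v0 (L.mul v1 v1)) v2)) (lem9 (L.mul v0 (L.mul v1 v1)) v2))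
  have lem35 : ∀ v0 v1 v2 : α, (L.mul (L.rdiv v0 (L.mul v1 v1)) (L.mul v1 (L.mul v1 v2))) = (L.mul v0 v2) := fun v0 v1 v2 => (Eq.trans (lem19 (L.rdiv v0 (L.mul v1 v1)) v1 v2) (congrArg (fun _w => (L.mul _w v2)) (lem11 v0 (L.mul v1 v1))))
  have lem40 : ∀ v0 v1 v2 : α, (L.mul v0 (L.mul v0 (L.ldiv (L.mul v1 (L.mul v0 v0)) v2))) = (L.ldiv v1 v2) := fun v0 v1 v2 => (Eq.trans (Eq.symm (lem13 v1 (L.mul v0 (L.mul v0 (L.ldiv (L.mul v1 (L.mul v0 v0)) v2))))) (congrArg (fun _w => (L.ldiv v1 _w)) (lem34 v1 v0 v2)))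
  have lem42 : ∀ v0 v1 v2 : α, (L.mul v0 (L.ldiv v1 v2)) = (L.mul (L.rdiv v0 (L.mul v1 v1)) (L.mul v1 v2)) := fun v0 v1 v2 => (Eq.trans (Eq.symm (lem35 v0 v1 (L.ldiv v1 v2))) (congrArg (fun _w => (L.mul (L.rdiv v0 (L.mul v1 v1)) (L.mul v1 _w))) (lem9 v1 v2)))
  have lem43 : ∀ v0 v1 : α, (L.mul v0 (L.ldiv v1 L.e)) = (L.mul (L.rdiv v0 (L.mul v1 v1)) v1) := fun v0 v1 => (Eq.trans (lem42 v0 v1 L.e) (congrArg (fun _w => (L.mul (L.rdiv v0 (L.mul v1 v1)) _w)) (lem8 v1)))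
  have lem44 : ∀ v0 v1 : α, v0 = (L.ldiv (L.rdiv v1 (L.mul v0 v0)) (L.mul v1 (L.ldiv v0 L.e))) := fun v0 v1 => (Eq.trans (Eq.symm (lem13 (L.rdiv v1 (L.mul v0 v0)) v0)) (congrArg (fun _w => (L.ldiv (L.rdiv v1 (L.mul v0 v0)) _w)) (Eq.symm (lem43 v1 v0))))
  have lem45 : ∀ v0 : α, v0 = (L.ldiv (L.rdiv v0 (L.mul v0 v0)) L.e) := fun v0 => (Eq.trans (lem44 v0 v0) (congrArg (fun _w => (L.ldiv (L.rdiv v0 (L.mul v0 v0)) _w)) (lem9 v0 L.e)))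
  have lem46 : ∀ v0 : α, (L.rdiv v0 (L.mul v0 v0)) = (L.rdiv L.e v0) := fun v0 => (Eq.trans (lem18 (L.rdiv v0 (L.mul v0 v0)) L.e) (congrArg (fun _w => (L.rdiv L.e _w)) (Eq.symm (lem45 v0))))
  have lem51 : ∀ v0 v1 : α, (L.rdiv v0 (L.mul v1 v1)) = (L.rdiv (L.mul v0 (L.ldiv v1 L.e)) v1) := fun v0 v1 => (Eq.trans (Eq.symm (lem15 (L.rdiv v0 (L.mul v1 v1)) v1)) (congrArg (fun _w => (L.rdiv _w v1)) (Eq.symm (lem43 v0 v1))))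
  have lem53 : ∀ v0 v1 : α, v0 = (L.mul (L.rdiv L.e v1) (L.mul v1 v0)) := fun v0 v1 => (Eq.trans (Eq.trans (Eq.symm (lem9 v1 v0)) (lem42 v1 v1 v0)) (congrArg (fun _w => (L.mul _w (L.mul v1 v0))) (lem46 v1)))
  have lem54 : ∀ v0 v1 : α, (L.ldiv v0 v1) = (L.mul (L.rdiv L.e v0) v1) := fun v0 v1 => (Eq.trans (lem53 (L.ldiv v0 v1) v0) (congrArg (fun _w => (L.mul (L.rdiv L.e v0) _w)) (lem9 v0 v1)))
  have lem55 : ∀ v0 : α, (L.ldiv v0 L.e) = (L.rdiv L.e v0) := fun v0 => (Eq.trans (lem54 v0 L.e) (lem8 (L.rdiv L.e v0)))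
  have lem59 : ∀ v0 v1 : α, (L.rdiv L.e v0) = (L.rdiv v1 (L.mul v0 v1)) := fun v0 v1 => (Eq.trans (Eq.symm (lem15 (L.rdiv L.e v0) (L.mul v0 v1))) (congrArg (fun _w => (L.rdiv _w (L.mul v0 v1))) (Eq.symm (lem53 v1 v0))))
  have lem62 : ∀ v0 v1 : α, (L.rdiv L.e (L.rdiv v0 v1)) = (L.rdiv v1 v0) := fun v0 v1 => (Eq.trans (lem59 (L.rdiv v0 v1) v1) (congrArg (fun _w => (L.rdiv v1 _w)) (lem11 v0 v1)))
  have lem67 : ∀ v0 v1 v2 : α, (L.ldiv (L.rdiv v0 v1) v2) = (L.mul (L.rdiv v1 v0) v2) := fun v0 v1 v2 => (Eq.trans (lem54 (L.rdiv v0 v1) v2) (congrArg (fun _w => (L.mul _w v2)) (lem62 v0 v1)))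
  have lem71 : ∀ v0 v1 : α, (L.rdiv (L.rdiv v0 (L.rdiv L.e v1)) (L.mul v1 v1)) = (L.rdiv v0 v1) := fun v0 v1 => (Eq.trans (Eq.trans (congrArg (fun _w => (L.rdiv (L.rdiv v0 _w) (L.mul v1 v1))) (Eq.symm (lem55 v1))) (lem51 (L.rdiv v0 (L.ldiv v1 L.e)) v1)) (congrArg (fun _w => (L.rdiv _w v1)) (lem11 v0 (L.ldiv v1 L.e))))
  have lem79 : ∀ v0 v1 : α, (L.rdiv v0 (L.rdiv L.e v1)) = (L.mul (L.rdiv v0 v1) (L.mul v1 v1)) := fun v0 v1 => (Eq.trans (Eq.symm (lem11 (L.rdiv v0 (L.rdiv L.e v1)) (L.mul v1 v1))) (congrArg (fun _w => (L.mul _w (L.mul v1 v1))) (lem71 v0 v1)))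
  have lem89 : ∀ v0 v1 v2 : α, (L.mul v0 (L.mul v0 v1)) = (L.mul (L.rdiv (L.mul v0 v0) v2) (L.mul v2 v1)) := fun v0 v1 v2 => (Eq.trans (Eq.trans (Eq.symm (lem13 (L.rdiv v2 (L.mul v0 v0)) (L.mul v0 (L.mul v0 v1)))) (congrArg (fun _w => (L.ldiv (L.rdiv v2 (L.mul v0 v0)) _w)) (lem35 v2 v0 v1))) (lem67 v2 (L.mul v0 v0) (L.mul v2 v1)))
  have lem90 : ∀ v0 v1 : α, (L.mul v0 (L.mul v0 v1)) = (L.rdiv (L.mul v0 v0) (L.rdiv L.e v1)) := fun v0 v1 => (Eq.trans (lem89 v0 v1 v1) (Eq.symm (lem79 (L.mul v0 v0) v1)))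
  have lem92 : ∀ v0 v1 : α, (L.mul v0 (L.mul v0 (L.rdiv L.e v1))) = (L.rdiv (L.mul v0 v0) v1) := fun v0 v1 => (Eq.trans (Eq.trans (congrArg (fun _w => (L.mul v0 (L.mul v0 _w))) (Eq.symm (lem55 v1))) (lem90 v0 (L.ldiv v1 L.e))) (congrArg (fun _w => (L.rdiv (L.mul v0 v0) _w)) (Eq.symm (lem18 v1 L.e))))
  have lem95 : ∀ v0 v1 : α, (L.mul v0 (L.rdiv L.e v1)) = (L.ldiv v0 (L.rdiv (L.mul v0 v0) v1)) := fun v0 v1 => (Eq.trans (Eq.symm (lem13 v0 (L.mul v0 (L.rdiv L.e v1)))) (congrArg (fun _w => (L.ldiv v0 _w)) (lem92 v0 v1)))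
  have lem100 : ∀ v0 v1 : α, (L.mul v0 (L.rdiv L.e (L.ldiv v1 (L.mul v0 v0)))) = (L.ldiv v0 v1) := fun v0 v1 => (Eq.trans (lem95 v0 (L.ldiv v1 (L.mul v0 v0))) (congrArg (fun _w => (L.ldiv v0 _w)) (Eq.symm (lem18 v1 (L.mul v0 v0)))))
  have lem103 : ∀ v0 v1 : α, (L.rdiv L.e (L.ldiv v0 (L.mul v1 v1))) = (L.ldiv v1 (L.ldiv v1 v0)) := fun v0 v1 => (Eq.trans (Eq.symm (lem13 v1 (L.rdiv L.e (L.ldiv v0 (L.mul v1 v1))))) (congrArg (fun _w => (L.ldiv v1 _w)) (lem100 v1 v0)))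
  have lem112 : ∀ v0 v1 v2 : α, (L.mul (L.rdiv (L.mul v0 v0) v1) v2) = (L.mul v0 (L.mul v0 (L.ldiv v1 v2))) := fun v0 v1 v2 => (Eq.trans (Eq.trans (Eq.symm (lem67 v1 (L.mul v0 v0) v2)) (Eq.symm (lem40 v0 (L.rdiv v1 (L.mul v0 v0)) v2))) (congrArg (fun _w => (L.mul v0 (L.mul v0 (L.ldiv _w v2)))) (lem11 v1 (L.mul v0 v0))))
  have lem166 : ∀ v0 v1 v2 : α, (L.ldiv (L.ldiv v0 (L.mul v1 v1)) v2) = (L.mul (L.ldiv v1 (L.ldiv v1 v0)) v2) := fun v0 v1 v2 => (Eq.trans (lem54 (L.ldiv v0 (L.mul v1 v1)) v2) (congrArg (fun _w => (L.mul _w v2)) (lem103 v0 v1)))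
  have lem175 : ∀ v0 v1 v2 : α, (L.mul v0 (L.mul v0 (L.mul (L.ldiv v0 (L.ldiv v0 v1)) v2))) = (L.mul v1 v2) := fun v0 v1 v2 => (Eq.trans (Eq.trans (congrArg (fun _w => (L.mul v0 (L.mul v0 _w))) (Eq.symm (lem166 v1 v0 v2))) (Eq.symm (lem112 v0 (L.ldiv v1 (L.mul v0 v0)) v2))) (congrArg (fun _w => (L.mul _w v2)) (Eq.symm (lem18 v1 (L.mul v0 v0)))))
  have lem198 : ∀ v0 v1 v2 : α, (L.mul (L.mul v0 v1) v2) = (L.mul v0 (L.mul v0 (L.mul (L.ldiv v0 v1) v2))) := fun v0 v1 v2 => (Eq.trans (Eq.symm (lem175 v0 (L.mul v0 v1) v2)) (congrArg (fun _w => (L.mul v0 (L.mul v0 (L.mul (L.ldiv v0 _w) v2)))) (lem13 v0 v1)))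
  have lem209 : ∀ v0 v1 v2 : α, (L.mul (L.mul v0 (L.mul v0 v1)) v2) = (L.mul v0 (L.mul v0 (L.mul v1 v2))) := fun v0 v1 v2 => (Eq.trans (lem198 v0 (L.mul v0 v1) v2) (congrArg (fun _w => (L.mul v0 (L.mul v0 (L.mul _w v2)))) (lem13 v0 v1)))
  exact Eq.trans (Eq.symm (lem20 x (L.mul y z))) (Eq.symm (lem209 x y z))
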